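/- Let S be a finite set of points in ℝ² in general position with a, b ∈ S distinct. If c and c' are both witnesses for the exit edge ab and c and c' lie strictly on the same side of the line through a and b, then c = c'. Consequently, an exit edge has at most two witnesses, at most one on each side of the line through its endpoints. -/
import Mathlib


open Finset

/-- Points of the plane. -/
abbrev Pt := ℝ × ℝ

/-- Twice the signed area of the triangle `p q r` (orientation determinant). -/
def det3 (p q r : Pt) : ℝ := (q.1 - p.1) * (r.2 - p.2) - (q.2 - p.2) * (r.1 - p.1)

/-- A finite point set is in general position if no three distinct points are collinear. -/
def GenPos (S : Finset Pt) : Prop :=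
  ∀ p ∈ S, ∀ q ∈ S, ∀ r ∈ S, p ≠ q → p ≠ r → q ≠ r → det3 p q r ≠ 0

/-- The line through `u` and `v` strictly separates the points `x` and `y`. -/
def StrictSep (u v x y : Pt) : Prop := det3 u v x * det3 u v y < 0

/-- `ab` is an exit edge of `S` with witness `c`: no point `p ∈ S \ {a,b,c}` is such that
the line through `a` and `p` strictly separates `b` from `c`, or the line through `b`
and `p` strictly separates `a` from `c`. -/
def IsExitWitness (S : Finset Pt) (a b c : Pt) : Prop :=
  a ∈ S ∧ b ∈ S ∧ c ∈ S ∧ a ≠ b ∧ a ≠ c ∧ b ≠ c ∧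
    ∀ p ∈ S, p ≠ a → p ≠ b → p ≠ c → ¬ StrictSep a p b c ∧ ¬ StrictSep b p a c

/-- `ab` is an exit edge of `S` if it has some witness. -/
def IsExitEdge (S : Finset Pt) (a b : Pt) : Prop := ∃ c, IsExitWitness S a b c

/-- An exit edge has at most one witness strictly on each side of its supporting line. -/
theorem exit_edge_witness_unique_per_side (S : Finset Pt) (a b c c' : Pt)
    (hgp : GenPos S)
    (hw : IsExitWitness S a b c) (hw' : IsExitWitness S a b c')
    (hside : 0 < det3 a b c * det3 a b c') :
    c = c' := by
  by_contra hne
  obtain ⟨haS, hbS, hcS, hab, hac, hbc, hcond⟩ := hw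
  obtain ⟨-, -, hc'S, -, hac', hbc', hcond'⟩ := hw'
  have h1 := (hcond c' hc'S (fun h => hac' h.symm) (fun h => hbc' h.symm)
    (fun h => hne h.symm)).1
  have h3 := (hcond' c hcS (fun h => hac h.symm) (fun h => hbc h.symm) hne).1
  have hr : det3 a c c' ≠ 0 := hgp a haS c hcS c' hc'S hac hac' hne
  unfold StrictSep at h1 h3
  push_neg at h1 h3
  have e1 : det3 a c' b = -det3 a b c' := by unfold det3; ring
  have e2 : det3 a c' c = -det3 a c c' := by unfold det3; ring
  have e3 : det3 a c b = -det3 a b c := by unfold det3; ring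
  rw [e1, e2] at h1
  rw [e3] at h3
  have hr2 : 0 < det3 a c c' ^ 2 := by positivity
  nlinarith [mul_nonneg h1 h3, hr2, hside]
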